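/- There exist absolute constants K₁, K₂ > 0 such that for all natural numbers m, t, t_e with m ≥ 4, t + t_e ≥ 1, and K₁·(t+t_e)·log₂(m)·log₂(log₂ m) ≤ m, there exist a natural number n with n ≤ m + K₂·(t+t_e)·log₂(m)·log₂(m/(t+t_e)) and an injective encoding map Enc : {0,1}^m → {0,1}^n whose image is a t-breaks t_e-edit-errors resilient code of length n. -/

import Mathlib

set_option maxHeartbeats 1000000

/-- Costs for the Levenshtein distance (formerly `Mathlib.Data.List.EditDistance`). -/
structure Levenshtein.Cost (α β δ : Type*) where
  delete : α → δ
  insert : β → δ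
  substitute : α → β → δ

/-- The default cost: every operation costs 1, substituting equal letters costs 0. -/
def Levenshtein.defaultCost {α : Type*} [DecidableEq α] : Levenshtein.Cost α α ℕ where
  delete _ := 1
  insert _ := 1
  substitute a b := if a = b then 0 else 1

/-- The Levenshtein distance, characterized by the recursion equations of the removed
Mathlib definition. -/
def levenshtein {α β δ : Type*} [AddZeroClass δ] [Min δ] (C : Levenshtein.Cost α β δ) :
    List α → List β → δ
  | [], [] => 0
  | x :: xs, [] => C.delete x + levenshtein C xs []
  | [], y :: ys => C.insert y + levenshtein C [] ys
  | x :: xs, y :: ys =>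
    min (C.delete x + levenshtein C xs (y :: ys))
      (min (C.insert y + levenshtein C (x :: xs) ys) (C.substitute x y + levenshtein C xs ys))

/-- The edit (Levenshtein) distance between two binary words. -/
def editDist (x y : List Bool) : ℕ :=
  levenshtein Levenshtein.defaultCost x y

/-- The `t`-breaks `te`-edit-errors channel output set of a binary word `w`. -/
def BreakEdit (t te : ℕ) (w : List Bool) : Set (Multiset (List Bool)) :=
  { S | Multiset.card S = t + 1 ∧ (∀ f ∈ S, f ≠ []) ∧
      ∃ l : List (List Bool), (l : Multiset (List Bool)) = S ∧ editDist l.flatten w ≤ te }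

/-- A set of words is `t`-breaks `te`-edit-errors resilient if the channel output
sets of distinct codewords are disjoint. -/
def ResilientBESet (t te : ℕ) (C : Set (List Bool)) : Prop :=
  ∀ c ∈ C, ∀ c' ∈ C, c ≠ c' → BreakEdit t te c ∩ BreakEdit t te c' = ∅

lemma levenshtein_nil_cons {α β δ : Type*} [AddZeroClass δ] [Min δ]
    (C : Levenshtein.Cost α β δ) (y : β) (ys : List β) :
    levenshtein C [] (y :: ys) = C.insert y + levenshtein C [] ys := by
  rw [levenshtein]

lemma levenshtein_cons_nil {α β δ : Type*} [AddZeroClass δ] [Min δ]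
    (C : Levenshtein.Cost α β δ) (x : α) (xs : List α) :
    levenshtein C (x :: xs) [] = C.delete x + levenshtein C xs [] := by
  rw [levenshtein]

lemma levenshtein_cons_cons {α β δ : Type*} [AddZeroClass δ] [Min δ]
    (C : Levenshtein.Cost α β δ) (x : α) (xs : List α) (y : β) (ys : List β) :
    levenshtein C (x :: xs) (y :: ys) =
      min (C.delete x + levenshtein C xs (y :: ys))
        (min (C.insert y + levenshtein C (x :: xs) ys) (C.substitute x y + levenshtein C xs ys)) := by
  rw [levenshtein]

lemma Levenshtein.defaultCost_delete {α : Type*} [DecidableEq α] (a : α) :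
    (Levenshtein.defaultCost : Levenshtein.Cost α α ℕ).delete a = 1 := rfl

lemma Levenshtein.defaultCost_insert {α : Type*} [DecidableEq α] (a : α) :
    (Levenshtein.defaultCost : Levenshtein.Cost α α ℕ).insert a = 1 := rfl

lemma Levenshtein.defaultCost_substitute {α : Type*} [DecidableEq α] (a b : α) :
    (Levenshtein.defaultCost : Levenshtein.Cost α α ℕ).substitute a b = if a = b then 0 else 1 := rfl

namespace ResilientAux

/-- All words obtainable from `x` by one insertion, deletion, or substitution. -/
def nextF (x : List Bool) : Finset (List Bool) :=
  ((Finset.range (x.length + 1)).biUnion fun i =>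
    {x.insertIdx i true, x.insertIdx i false}) ∪
  ((Finset.range x.length).image fun i => x.eraseIdx i) ∪
  ((Finset.range x.length).biUnion fun i => {x.set i true, x.set i false})

def nextF' (x : List Bool) : Finset (List Bool) := insert x (nextF x)

/-- Ball of radius `k` around `x` in single-edit steps. -/
def ballF : ℕ → List Bool → Finset (List Bool)
  | 0, x => {x}
  | k+1, x => (nextF' x).biUnion (ballF k)

lemma self_mem_nextF' (x : List Bool) : x ∈ nextF' x := Finset.mem_insert_self _ _

lemma self_mem_ballF (k : ℕ) (x : List Bool) : x ∈ ballF k x := by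
  induction k with
  | zero => simp [ballF]
  | succ k ih => exact Finset.mem_biUnion.2 ⟨x, self_mem_nextF' x, ih⟩

lemma step_front {x z y : List Bool} {k : ℕ} (hz : z ∈ nextF' x) (hy : y ∈ ballF k z) :
    y ∈ ballF (k+1) x :=
  Finset.mem_biUnion.2 ⟨z, hz, hy⟩

lemma insert_mem_nextF (x : List Bool) (i : ℕ) (hi : i ≤ x.length) (b : Bool) :
    x.insertIdx i b ∈ nextF x := by
  apply Finset.mem_union_left
  apply Finset.mem_union_left
  refine Finset.mem_biUnion.2 ⟨i, Finset.mem_range.2 (by omega), ?_⟩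
  cases b <;> simp

lemma erase_mem_nextF (x : List Bool) (i : ℕ) (hi : i < x.length) :
    x.eraseIdx i ∈ nextF x := by
  apply Finset.mem_union_left
  apply Finset.mem_union_right
  exact Finset.mem_image.2 ⟨i, Finset.mem_range.2 hi, rfl⟩

lemma set_mem_nextF (x : List Bool) (i : ℕ) (hi : i < x.length) (b : Bool) :
    x.set i b ∈ nextF x := by
  apply Finset.mem_union_right
  refine Finset.mem_biUnion.2 ⟨i, Finset.mem_range.2 hi, ?_⟩
  cases b <;> simp

lemma card_nextF' (x : List Bool) : (nextF' x).card ≤ 5 * x.length + 3 := by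
  have h1 : (((Finset.range (x.length + 1)).biUnion fun i =>
      ({x.insertIdx i true, x.insertIdx i false} : Finset (List Bool)))).card
      ≤ (x.length + 1) * 2 := by
    refine (Finset.card_biUnion_le_card_mul _ _ 2 (fun a _ => ?_)).trans ?_
    · exact (Finset.card_insert_le _ _).trans (by simp)
    · simp [Finset.card_range]
  have h2 : (((Finset.range x.length).image fun i => x.eraseIdx i)).card ≤ x.length :=
    (Finset.card_image_le).trans (by simp)
  have h3 : (((Finset.range x.length).biUnion fun i =>
      ({x.set i true, x.set i false} : Finset (List Bool)))).card ≤ x.length * 2 := by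
    refine (Finset.card_biUnion_le_card_mul _ _ 2 (fun a _ => ?_)).trans ?_
    · exact (Finset.card_insert_le _ _).trans (by simp)
    · simp [Finset.card_range]
  calc (nextF' x).card ≤ (nextF x).card + 1 := Finset.card_insert_le _ _
    _ ≤ _ := by
      unfold nextF
      have hu1 := Finset.card_union_le ((((Finset.range (x.length + 1)).biUnion fun i =>
        ({x.insertIdx i true, x.insertIdx i false} : Finset (List Bool)))) ∪
        ((Finset.range x.length).image fun i => x.eraseIdx i))
        ((Finset.range x.length).biUnion fun i =>
          ({x.set i true, x.set i false} : Finset (List Bool)))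
      have hu2 := Finset.card_union_le (((Finset.range (x.length + 1)).biUnion fun i =>
        ({x.insertIdx i true, x.insertIdx i false} : Finset (List Bool))))
        ((Finset.range x.length).image fun i => x.eraseIdx i)
      omega

lemma length_le_of_mem_nextF {x y : List Bool} (h : y ∈ nextF x) :
    y.length ≤ x.length + 1 := by
  unfold nextF at h
  simp only [Finset.mem_union, Finset.mem_biUnion, Finset.mem_image, Finset.mem_range,
    Finset.mem_insert, Finset.mem_singleton] at h
  rcases h with ((⟨i, hi, rfl | rfl⟩ | ⟨i, hi, rfl⟩) | ⟨i, hi, rfl | rfl⟩) <;>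
    first
      | exact List.length_insertIdx_le_succ
      | (rw [List.length_eraseIdx]; split <;> omega)
      | (rw [List.length_set]; omega)

lemma length_le_of_mem_nextF' {x y : List Bool} (h : y ∈ nextF' x) :
    y.length ≤ x.length + 1 := by
  rcases Finset.mem_insert.1 h with rfl | h
  · omega
  · exact length_le_of_mem_nextF h

lemma length_le_of_mem_ballF : ∀ {k : ℕ} {x y : List Bool}, y ∈ ballF k x →
    y.length ≤ x.length + k := by
  intro k
  induction k with
  | zero => intro x y h; obtain rfl := Finset.mem_singleton.1 h; omega
  | succ k ih =>
    intro x y h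
    obtain ⟨z, hz, hy⟩ := Finset.mem_biUnion.1 h
    have := ih hy
    have := length_le_of_mem_nextF' hz
    omega

lemma card_ballF : ∀ (k : ℕ) (x : List Bool) (L : ℕ), x.length ≤ L →
    (ballF k x).card ≤ (5 * (L + k) + 3) ^ k := by
  intro k
  induction k with
  | zero => intro x L _; simp [ballF]
  | succ k ih =>
    intro x L hL
    have hstep : ∀ z ∈ nextF' x, (ballF k z).card ≤ (5 * (L + 1 + k) + 3) ^ k := by
      intro z hz
      exact ih z (L+1) ((length_le_of_mem_nextF' hz).trans (by omega))
    calc (ballF (k+1) x).card ≤ (nextF' x).card * (5 * (L + 1 + k) + 3) ^ k :=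
          Finset.card_biUnion_le_card_mul _ _ _ hstep
      _ ≤ (5 * L + 3) * (5 * (L + 1 + k) + 3) ^ k :=
          Nat.mul_le_mul_right _ ((card_nextF' x).trans (by omega))
      _ ≤ (5 * (L + (k+1)) + 3) * (5 * (L + (k+1)) + 3) ^ k := by
          have h1 : 5 * L + 3 ≤ 5 * (L + (k+1)) + 3 := by omega
          have h2 : (5 * (L + 1 + k) + 3) ^ k ≤ (5 * (L + (k+1)) + 3) ^ k :=
            Nat.pow_le_pow_left (by omega) k
          exact Nat.mul_le_mul h1 h2
      _ = (5 * (L + (k+1)) + 3) ^ (k+1) := (pow_succ' _ _).symm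

end ResilientAux

namespace ResilientAux2
open ResilientAux

lemma mem_ballF_zero {x y : List Bool} (h : y ∈ ballF 0 x) : y = x :=
  Finset.mem_singleton.1 h

lemma mem_ballF_succ {x y : List Bool} {k : ℕ} (h : y ∈ ballF (k+1) x) :
    ∃ z ∈ nextF' x, y ∈ ballF k z :=
  Finset.mem_biUnion.1 h

lemma insert_front {x y : List Bool} {k : ℕ} (b : Bool) (h : y ∈ ballF k x) :
    (b :: y) ∈ ballF (k+1) x := by
  induction k generalizing x with
  | zero =>
    obtain rfl := mem_ballF_zero h
    refine step_front (x := y) ?_ (self_mem_ballF 0 _)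
    exact Finset.mem_insert_of_mem (by simpa using insert_mem_nextF y 0 (by omega) b)
  | succ k ih =>
    obtain ⟨z, hz, hy⟩ := mem_ballF_succ h
    exact step_front hz (ih hy)

lemma cons_nextF {x z : List Bool} (a : Bool) (h : z ∈ nextF x) :
    (a :: z) ∈ nextF (a :: x) := by
  unfold nextF at h
  simp only [Finset.mem_union, Finset.mem_biUnion, Finset.mem_image, Finset.mem_range,
    Finset.mem_insert, Finset.mem_singleton] at h
  rcases h with ((⟨i, hi, rfl | rfl⟩ | ⟨i, hi, rfl⟩) | ⟨i, hi, rfl | rfl⟩)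
  · rw [← List.insertIdx_succ_cons]
    exact insert_mem_nextF _ (i+1) (by simp; omega) _
  · rw [← List.insertIdx_succ_cons]
    exact insert_mem_nextF _ (i+1) (by simp; omega) _
  · rw [← List.eraseIdx_cons_succ]
    exact erase_mem_nextF _ (i+1) (by simp; omega)
  · rw [← List.set_cons_succ]
    exact set_mem_nextF _ (i+1) (by simp; omega) _
  · rw [← List.set_cons_succ]
    exact set_mem_nextF _ (i+1) (by simp; omega) _

lemma cons_nextF' {x z : List Bool} (a : Bool) (h : z ∈ nextF' x) :
    (a :: z) ∈ nextF' (a :: x) := by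
  rcases Finset.mem_insert.1 h with rfl | h
  · exact self_mem_nextF' _
  · exact Finset.mem_insert_of_mem (cons_nextF a h)

lemma cons_lift {x y : List Bool} {k : ℕ} (a : Bool) (h : y ∈ ballF k x) :
    (a :: y) ∈ ballF k (a :: x) := by
  induction k generalizing x with
  | zero => obtain rfl := mem_ballF_zero h; exact self_mem_ballF 0 _
  | succ k ih =>
    obtain ⟨z, hz, hy⟩ := mem_ballF_succ h
    exact step_front (cons_nextF' a hz) (ih hy)

lemma step_back {x y z : List Bool} {k : ℕ} (hy : y ∈ ballF k x) (hz : z ∈ nextF' y) :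
    z ∈ ballF (k+1) x := by
  induction k generalizing x with
  | zero => obtain rfl := mem_ballF_zero hy; exact step_front hz (self_mem_ballF 0 _)
  | succ k ih =>
    obtain ⟨w, hw, hy'⟩ := mem_ballF_succ hy
    exact step_front hw (ih hy')

lemma set_self : ∀ (l : List Bool) (i : ℕ) (h : i < l.length), l.set i l[i] = l := by
  intro l
  induction l with
  | nil => intro i h; simp at h
  | cons a l ih =>
    intro i h
    cases i with
    | zero => simp
    | succ i => simpa using ih i (by simpa using h)

lemma insertIdx_eraseIdx_self : ∀ (l : List Bool) (i : ℕ) (h : i < l.length),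
    (l.eraseIdx i).insertIdx i l[i] = l := by
  intro l
  induction l with
  | nil => intro i h; simp at h
  | cons a l ih =>
    intro i h
    cases i with
    | zero => simp
    | succ i =>
      rw [List.eraseIdx_cons_succ, List.insertIdx_succ_cons]
      simpa using ih i (by simpa using h)

lemma rev_nextF' {x z : List Bool} (h : z ∈ nextF' x) : x ∈ nextF' z := by
  rcases Finset.mem_insert.1 h with rfl | h
  · exact self_mem_nextF' _
  · unfold nextF at h
    simp only [Finset.mem_union, Finset.mem_biUnion, Finset.mem_image, Finset.mem_range,
      Finset.mem_insert, Finset.mem_singleton] at h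
    apply Finset.mem_insert_of_mem
    rcases h with ((⟨i, hi, rfl | rfl⟩ | ⟨i, hi, rfl⟩) | ⟨i, hi, rfl | rfl⟩)
    · have h' := erase_mem_nextF (x.insertIdx i true) i
        (by rw [List.length_insertIdx_of_le_length (by omega)]; omega)
      rwa [List.eraseIdx_insertIdx_self] at h'
    · have h' := erase_mem_nextF (x.insertIdx i false) i
        (by rw [List.length_insertIdx_of_le_length (by omega)]; omega)
      rwa [List.eraseIdx_insertIdx_self] at h'
    · have h' := insert_mem_nextF (x.eraseIdx i) i
        (by rw [List.length_eraseIdx]; split <;> omega) x[i]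
      rwa [insertIdx_eraseIdx_self x i hi] at h'
    · have h' := set_mem_nextF (x.set i true) i (by rw [List.length_set]; omega) x[i]
      rwa [List.set_set, set_self x i hi] at h'
    · have h' := set_mem_nextF (x.set i false) i (by rw [List.length_set]; omega) x[i]
      rwa [List.set_set, set_self x i hi] at h'

lemma symm_ballF {k : ℕ} : ∀ {x y : List Bool}, y ∈ ballF k x → x ∈ ballF k y := by
  induction k with
  | zero => intro x y h; obtain rfl := mem_ballF_zero h; exact self_mem_ballF 0 _
  | succ k ih =>
    intro x y h
    obtain ⟨z, hz, hy⟩ := mem_ballF_succ h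
    exact step_back (ih hy) (rev_nextF' hz)

end ResilientAux2

namespace ResilientAux3
open ResilientAux ResilientAux2

theorem mem_ballF_of_editDist : ∀ (x y : List Bool) (k : ℕ), editDist x y ≤ k →
    y ∈ ballF k x
  | [], [], k => fun _ => self_mem_ballF k []
  | [], (b :: ys), k => by
    intro h
    rw [editDist, levenshtein_nil_cons] at h
    simp only [Levenshtein.defaultCost_insert] at h
    obtain ⟨k', rfl⟩ : ∃ k', k = k' + 1 := ⟨k - 1, by omega⟩
    have := mem_ballF_of_editDist [] ys k' (by rw [editDist] at *; omega)
    exact insert_front b this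
  | (a :: xs), [], k => by
    intro h
    rw [editDist, levenshtein_cons_nil] at h
    simp only [Levenshtein.defaultCost_delete] at h
    obtain ⟨k', rfl⟩ : ∃ k', k = k' + 1 := ⟨k - 1, by omega⟩
    have := mem_ballF_of_editDist xs [] k' (by rw [editDist]; omega)
    refine step_front ?_ this
    exact Finset.mem_insert_of_mem (by simpa using erase_mem_nextF (a :: xs) 0 (by simp))
  | (a :: xs), (b :: ys), k => by
    intro h
    rw [editDist, levenshtein_cons_cons] at h
    simp only [Levenshtein.defaultCost_delete, Levenshtein.defaultCost_insert,
      Levenshtein.defaultCost_substitute] at h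
    rcases min_le_iff.1 h with h1 | h'
    · -- delete a
      obtain ⟨k', rfl⟩ : ∃ k', k = k' + 1 := ⟨k - 1, by omega⟩
      have := mem_ballF_of_editDist xs (b :: ys) k' (by rw [editDist]; omega)
      refine step_front ?_ this
      exact Finset.mem_insert_of_mem (by simpa using erase_mem_nextF (a :: xs) 0 (by simp))
    · rcases min_le_iff.1 h' with h2 | h3
      · -- insert b
        obtain ⟨k', rfl⟩ : ∃ k', k = k' + 1 := ⟨k - 1, by omega⟩
        have := mem_ballF_of_editDist (a :: xs) ys k' (by rw [editDist]; omega)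
        exact insert_front b this
      · -- substitute
        by_cases hab : a = b
        · subst hab
          simp only [if_pos rfl, Nat.zero_add] at h3
          have := mem_ballF_of_editDist xs ys k (by rw [editDist]; omega)
          exact cons_lift a this
        · rw [if_neg hab] at h3
          obtain ⟨k', rfl⟩ : ∃ k', k = k' + 1 := ⟨k - 1, by omega⟩
          have := mem_ballF_of_editDist xs ys k' (by rw [editDist]; omega)
          have h4 : (b :: ys) ∈ ballF k' (b :: xs) := cons_lift b this
          refine step_front ?_ h4
          refine Finset.mem_insert_of_mem ?_
          have := set_mem_nextF (a :: xs) 0 (by simp) b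
          simpa using this
  termination_by x y k => x.length + y.length

end ResilientAux3

namespace ResilientAux4
open ResilientAux ResilientAux2 ResilientAux3

/-- All ways to write `w` as a concatenation of `t+1` (possibly empty) pieces. -/
def splitsF : ℕ → List Bool → Finset (List (List Bool))
  | 0, w => {[w]}
  | t+1, w => (Finset.range (w.length + 1)).biUnion fun i =>
      (splitsF t (w.drop i)).image fun l => w.take i :: l

lemma mem_splitsF : ∀ (t : ℕ) (l : List (List Bool)) (w : List Bool),
    l.length = t + 1 → l.flatten = w → l ∈ splitsF t w := by
  intro t
  induction t with
  | zero =>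
    intro l w hl hf
    match l, hl with
    | [a], _ =>
      simp only [List.flatten_cons, List.flatten_nil, List.append_nil] at hf
      subst hf
      simp [splitsF]
  | succ t ih =>
    intro l w hl hf
    match l with
    | a :: l2 =>
      have hlen : l2.length = t + 1 := by simpa using hl
      rw [List.flatten_cons] at hf
      subst hf
      refine Finset.mem_biUnion.2 ⟨a.length, Finset.mem_range.2
        (by simp only [List.length_append]; omega), ?_⟩
      refine Finset.mem_image.2 ⟨l2, ih l2 _ hlen (by rw [List.drop_left]), ?_⟩
      rw [List.take_left]

lemma splitsF_sound : ∀ (t : ℕ) (l : List (List Bool)) (w : List Bool),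
    l ∈ splitsF t w → l.length = t + 1 ∧ l.flatten = w := by
  intro t
  induction t with
  | zero =>
    intro l w h
    obtain rfl := Finset.mem_singleton.1 h
    simp
  | succ t ih =>
    intro l w h
    obtain ⟨i, _, hmem⟩ := Finset.mem_biUnion.1 h
    obtain ⟨l2, hl2, rfl⟩ := Finset.mem_image.1 hmem
    obtain ⟨h1, h2⟩ := ih l2 _ hl2
    constructor
    · simp [h1]
    · rw [List.flatten_cons, h2, List.take_append_drop]

lemma card_splitsF : ∀ (t : ℕ) (w : List Bool), (splitsF t w).card ≤ (w.length + 1) ^ t := by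
  intro t
  induction t with
  | zero => intro w; simp [splitsF]
  | succ t ih =>
    intro w
    calc (splitsF (t+1) w).card ≤ (Finset.range (w.length + 1)).card * (w.length + 1) ^ t := by
          refine Finset.card_biUnion_le_card_mul _ _ _ fun i _ => ?_
          refine Finset.card_image_le.trans ((ih _).trans ?_)
          exact Nat.pow_le_pow_left (by simp only [List.length_drop]; omega) t
      _ = (w.length + 1) ^ (t + 1) := by rw [Finset.card_range]; ring

/-- Superset of words confusable with `c` through `t` breaks and `te` edits on each side. -/
def confF (t te : ℕ) (c : List Bool) : Finset (List Bool) :=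
  (ballF te c).biUnion fun w => (splitsF t w).biUnion fun l =>
    l.permutations.toFinset.biUnion fun l' => ballF te l'.flatten

lemma mem_confF_of_conf {t te : ℕ} {c c' : List Bool}
    (h : (BreakEdit t te c ∩ BreakEdit t te c').Nonempty) : c' ∈ confF t te c := by
  obtain ⟨S, ⟨hcard, _, l, hl, hd⟩, ⟨_, _, l', hl', hd'⟩⟩ := h
  have hw : l.flatten ∈ ballF te c :=
    symm_ballF (mem_ballF_of_editDist l.flatten c te hd)
  have hlsp : l ∈ splitsF t l.flatten := mem_splitsF t l l.flatten
    (by have := congrArg Multiset.card hl; simp at this; omega) rfl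
  have hperm : l' ∈ l.permutations := by
    rw [List.mem_permutations]
    exact Multiset.coe_eq_coe.1 (hl'.trans hl.symm)
  refine Finset.mem_biUnion.2 ⟨l.flatten, hw, ?_⟩
  refine Finset.mem_biUnion.2 ⟨l, hlsp, ?_⟩
  refine Finset.mem_biUnion.2 ⟨l', List.mem_toFinset.2 hperm, ?_⟩
  exact mem_ballF_of_editDist l'.flatten c' te hd'

lemma card_confF (t te : ℕ) (c : List Bool) :
    (confF t te c).card ≤ (6 * (c.length + 3 * (t + te) + 1)) ^ (2 * (t + te) + 1) := by
  set n := c.length with hn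
  set M := 6 * (n + 3 * (t + te) + 1) with hM
  have hM1 : 1 ≤ M := by omega
  -- inner bound: for w in the ball
  have hinner : ∀ w ∈ ballF te c,
      ((splitsF t w).biUnion fun l => l.permutations.toFinset.biUnion fun l' =>
        ballF te l'.flatten).card ≤ M ^ t * (M ^ (t + 1) * M ^ te) := by
    intro w hw
    have hwlen : w.length ≤ n + te := length_le_of_mem_ballF hw
    refine (Finset.card_biUnion_le_card_mul _ _ (M ^ (t + 1) * M ^ te)
      (fun l hl => ?_)).trans ?_
    · -- permutations of one split
      obtain ⟨hllen, hlfl⟩ := splitsF_sound t l w hl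
      refine (Finset.card_biUnion_le_card_mul _ _ (M ^ te) (fun l' hl' => ?_)).trans ?_
      · -- one ball around a permuted flatten
        have hperm : l'.Perm l := List.mem_permutations.1 (List.mem_toFinset.1 hl')
        have hflen : l'.flatten.length = w.length := by
          rw [List.length_flatten, ← hlfl, List.length_flatten]
          exact List.Perm.sum_eq (hperm.map _)
        refine (card_ballF te l'.flatten (n + te + te) (by omega)).trans ?_
        exact Nat.pow_le_pow_left (by omega) te
      · refine Nat.mul_le_mul ?_ (le_refl _)
        calc l.permutations.toFinset.card ≤ l.permutations.length := List.toFinset_card_le _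
          _ = (t+1).factorial := by rw [List.length_permutations, hllen]
          _ ≤ (t+1) ^ (t+1) := Nat.factorial_le_pow _
          _ ≤ M ^ (t+1) := Nat.pow_le_pow_left (by omega) _
    · refine Nat.mul_le_mul ?_ (le_refl _)
      refine (card_splitsF t w).trans ?_
      exact Nat.pow_le_pow_left (by omega) t
  calc (confF t te c).card ≤ (ballF te c).card * (M ^ t * (M ^ (t + 1) * M ^ te)) :=
        Finset.card_biUnion_le_card_mul _ _ _ hinner
    _ ≤ M ^ te * (M ^ t * (M ^ (t + 1) * M ^ te)) := by
        refine Nat.mul_le_mul ?_ (le_refl _)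
        refine (card_ballF te c n (le_refl _)).trans ?_
        exact Nat.pow_le_pow_left (by omega) te
    _ = M ^ (2 * (t + te) + 1) := by
        rw [← pow_add, ← pow_add, ← pow_add]
        congr 1
        ring

end ResilientAux4

namespace ResilientAux5
open ResilientAux ResilientAux2 ResilientAux3 ResilientAux4

lemma greedy {α : Type*} [DecidableEq α] (R : α → α → Prop) (f : α → Finset α) (W : ℕ)
    (U₀ : Finset α) (hsym : ∀ a b, R a b → R b a)
    (hf : ∀ a ∈ U₀, (f a).card ≤ W) (hmem : ∀ a ∈ U₀, a ∈ f a)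
    (hR : ∀ a b, a ∈ U₀ → R a b → b ∈ f a) :
    ∀ U : Finset α, U ⊆ U₀ → ∃ S, S ⊆ U ∧ U.card ≤ S.card * W ∧
      ∀ a ∈ S, ∀ b ∈ S, a ≠ b → ¬ R a b := by
  intro U
  induction U using Finset.strongInduction with
  | _ U ih =>
    intro hU
    rcases U.eq_empty_or_nonempty with rfl | ⟨a, ha⟩
    · exact ⟨∅, by simp⟩
    · have haU₀ : a ∈ U₀ := hU ha
      have hanotin : a ∉ U \ f a := by simp [Finset.mem_sdiff, hmem _ haU₀]
      have hss : U \ f a ⊂ U :=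
        (Finset.ssubset_iff_of_subset Finset.sdiff_subset).2 ⟨a, ha, hanotin⟩
      obtain ⟨S, hSsub, hcard, hpair⟩ := ih (U \ f a) hss (Finset.sdiff_subset.trans hU)
      have haS : a ∉ S := fun h => hanotin (hSsub h)
      refine ⟨insert a S, ?_, ?_, ?_⟩
      · exact Finset.insert_subset ha (hSsub.trans Finset.sdiff_subset)
      · have hUsub : U ⊆ (U \ f a) ∪ f a := by
          intro x hx
          by_cases hxf : x ∈ f a
          · exact Finset.mem_union_right _ hxf
          · exact Finset.mem_union_left _ (Finset.mem_sdiff.2 ⟨hx, hxf⟩)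
        have h1 : U.card ≤ (U \ f a).card + (f a).card :=
          (Finset.card_le_card hUsub).trans (Finset.card_union_le _ _)
        have h2 : (insert a S).card = S.card + 1 := Finset.card_insert_of_notMem haS
        have h3 := hf a haU₀
        calc U.card ≤ (U \ f a).card + (f a).card := h1
          _ ≤ S.card * W + W := add_le_add hcard h3
          _ = (S.card + 1) * W := by ring
          _ = (insert a S).card * W := by rw [h2]
      · intro x hx y hy hne
        rcases Finset.mem_insert.1 hx with rfl | hx' <;>
          rcases Finset.mem_insert.1 hy with rfl | hy'
        · exact absurd rfl hne
        · intro hRxy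
          exact (Finset.mem_sdiff.1 (hSsub hy')).2 (hR _ _ haU₀ hRxy)
        · intro hRxy
          exact (Finset.mem_sdiff.1 (hSsub hx')).2 (hR _ _ haU₀ (hsym _ _ hRxy))
        · exact hpair _ hx' _ hy' hne

end ResilientAux5

open ResilientAux ResilientAux2 ResilientAux3 ResilientAux4 ResilientAux5 in
theorem exists_resilient_code_with_encoder :
    ∃ K₁ K₂ : ℝ, 0 < K₁ ∧ 0 < K₂ ∧
      ∀ m t te : ℕ, 4 ≤ m → 1 ≤ t + te →
        K₁ * ((t + te : ℕ) : ℝ) * Real.logb 2 m * Real.logb 2 (Real.logb 2 m) ≤ (m : ℝ) →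
        ∃ n : ℕ, ∃ Enc : (Fin m → Bool) → List Bool,
          (n : ℝ) ≤ (m : ℝ) +
            K₂ * ((t + te : ℕ) : ℝ) * Real.logb 2 m *
              Real.logb 2 ((m : ℝ) / ((t + te : ℕ) : ℝ)) ∧
          Function.Injective Enc ∧
          (∀ x : Fin m → Bool, (Enc x).length = n) ∧
          ResilientBESet t te (Set.range Enc) := by
  refine ⟨100, 25, by norm_num, by norm_num, ?_⟩
  intro m t te hm hs hyp
  set s := t + te with hsdef
  have h2 : (1:ℝ) < 2 := one_lt_two
  have hm0 : (0:ℝ) < m := by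
    have : (4:ℝ) ≤ m := by exact_mod_cast hm
    linarith
  have hs0 : (0:ℝ) < s := by exact_mod_cast hs
  have hs1 : (1:ℝ) ≤ s := by exact_mod_cast hs
  have hlb4 : Real.logb 2 (4:ℝ) = 2 := by
    rw [show (4:ℝ) = 2 ^ (2:ℕ) by norm_num, Real.logb_pow, Real.logb_self_eq_one h2]
    norm_num
  have hlb : (2:ℝ) ≤ Real.logb 2 m := by
    calc (2:ℝ) = Real.logb 2 4 := hlb4.symm
      _ ≤ Real.logb 2 m :=
        (Real.logb_le_logb h2 (by norm_num : (0:ℝ) < 4) hm0).2 (by exact_mod_cast hm)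
  have hll : (1:ℝ) ≤ Real.logb 2 (Real.logb 2 m) := by
    rw [← Real.logb_self_eq_one h2]
    exact (Real.logb_le_logb h2 two_pos (by linarith)).2 (by linarith)
  set lb := Real.logb 2 m with hlbdef
  -- consequences of the hypothesis
  have hA : (s:ℝ) * lb ≤ (m:ℝ) / 100 := by
    nlinarith [mul_le_mul_of_nonneg_left hll (by positivity : (0:ℝ) ≤ 100 * (s:ℝ) * lb)]
  have hB : 200 * s ≤ m := by
    have : (200:ℝ) * s ≤ m := by nlinarith
    exact_mod_cast this
  -- the ceiling log
  set L := Nat.clog 2 m with hLdef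
  have hmL : m ≤ 2 ^ L := Nat.le_pow_clog one_lt_two m
  have hL2 : 2 ≤ L := by
    by_contra hL
    have : 2 ^ L ≤ 2 ^ 1 := Nat.pow_le_pow_right (by norm_num) (by omega)
    omega
  have hLreal : (L:ℝ) ≤ lb + 1 := by
    have hpred : 2 ^ (L - 1) < m := by
      have := Nat.pow_pred_clog_lt_self (b := 2) one_lt_two (x := m) (by omega)
      simpa [Nat.pred_eq_sub_one] using this
    have hcast : ((2:ℝ)) ^ (L - 1 : ℕ) < m := by exact_mod_cast hpred
    have hlt : ((L - 1 : ℕ) : ℝ) < lb := by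
      have h0 : (0:ℝ) < (2:ℝ) ^ (L - 1 : ℕ) := by positivity
      have := Real.logb_lt_logb h2 h0 hcast
      rwa [Real.logb_pow, Real.logb_self_eq_one h2, mul_one] at this
    have : ((L - 1 : ℕ) : ℝ) = (L:ℝ) - 1 := by
      rw [Nat.cast_sub (by omega)]; norm_num
    linarith [this ▸ hlt]
  have hL15 : (L:ℝ) ≤ 1.5 * lb := by linarith
  -- choose redundancy and block length
  set r := 16 * s * L + 1 with hrdef
  set n := m + r with hndef
  have h16 : 16 * s * L ≤ m := by
    have hreal : (16:ℝ) * s * L ≤ m := by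
      have h1 : (16:ℝ) * s * L ≤ 16 * s * (1.5 * lb) := by
        have : (0:ℝ) ≤ 16 * s := by positivity
        nlinarith
      nlinarith
    exact_mod_cast hreal
  -- the counting bound
  set M := 6 * (n + 3 * s + 1) with hMdef
  set W := M ^ (2 * s + 1) + 1 with hWdef
  have hMle : M ≤ 2 ^ (L + 5) := by
    have h32 : M ≤ 32 * m := by omega
    calc M ≤ 32 * m := h32
      _ ≤ 32 * 2 ^ L := by omega
      _ = 2 ^ (L + 5) := by rw [pow_add]; ring
  have hexp : (L + 5) * (2 * s + 1) + 1 ≤ r := by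
    have h1 : 1 ≤ s := hs
    have : (L + 5) * (2 * s + 1) ≤ 16 * s * L := by nlinarith
    omega
  have hW2r : W ≤ 2 ^ r := by
    have h1 : M ^ (2 * s + 1) ≤ (2 ^ (L + 5)) ^ (2 * s + 1) :=
      Nat.pow_le_pow_left hMle _
    have h2' : (2 ^ (L + 5)) ^ (2 * s + 1) = 2 ^ ((L + 5) * (2 * s + 1)) := by
      rw [← pow_mul]
    have h3 : (0:ℕ) < 2 ^ ((L + 5) * (2 * s + 1)) := by positivity
    have h4 : W ≤ 2 ^ ((L + 5) * (2 * s + 1)) + 2 ^ ((L + 5) * (2 * s + 1)) := by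
      rw [hWdef]; omega
    calc W ≤ 2 ^ ((L + 5) * (2 * s + 1)) * 2 := by omega
      _ = 2 ^ ((L + 5) * (2 * s + 1) + 1) := by rw [pow_succ]
      _ ≤ 2 ^ r := Nat.pow_le_pow_right (by norm_num) hexp
  -- the universe of words of length n
  set U : Finset (List Bool) := (Finset.univ : Finset (Fin n → Bool)).image List.ofFn
    with hUdef
  have hUcard : U.card = 2 ^ n := by
    rw [hUdef, Finset.card_image_of_injective _ List.ofFn_injective, Finset.card_univ]
    simp [Fintype.card_fun]
  have hUlen : ∀ c ∈ U, c.length = n := by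
    intro c hc
    obtain ⟨g, _, rfl⟩ := Finset.mem_image.1 hc
    exact List.length_ofFn
  -- greedy selection
  set R : List Bool → List Bool → Prop :=
    fun c c' => (BreakEdit t te c ∩ BreakEdit t te c').Nonempty with hRdef
  set f : List Bool → Finset (List Bool) := fun c => insert c (confF t te c) with hfdef
  have hsym : ∀ a b, R a b → R b a := by
    rintro a b ⟨X, h1, h2⟩; exact ⟨X, h2, h1⟩
  have hf : ∀ a ∈ U, (f a).card ≤ W := by
    intro a ha
    refine (Finset.card_insert_le _ _).trans ?_
    have hcc := card_confF t te a
    rw [hUlen a ha, ← hsdef] at hcc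
    have : (f a).card = (insert a (confF t te a)).card := rfl
    rw [hWdef, hMdef]
    omega
  have hmem : ∀ a ∈ U, a ∈ f a := fun a _ => Finset.mem_insert_self _ _
  have hR : ∀ a b, a ∈ U → R a b → b ∈ f a := by
    intro a b _ hab
    exact Finset.mem_insert_of_mem (mem_confF_of_conf hab)
  obtain ⟨S, hSU, hScard, hSpair⟩ :=
    greedy R f W U hsym hf hmem hR U (le_refl _)
  have hScard2 : 2 ^ m ≤ S.card := by
    have h1 : 2 ^ m * 2 ^ r = 2 ^ n := by rw [hndef]; exact (pow_add 2 m r).symm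
    have h2' : 2 ^ n ≤ S.card * 2 ^ r := by
      calc 2 ^ n = U.card := hUcard.symm
        _ ≤ S.card * W := hScard
        _ ≤ S.card * 2 ^ r := Nat.mul_le_mul_left _ hW2r
    have h3 : (0:ℕ) < 2 ^ r := by positivity
    have := h1 ▸ h2'
    exact Nat.le_of_mul_le_mul_right this h3
  -- the encoder
  have hcardle : Fintype.card (Fin m → Bool) ≤ Fintype.card {x // x ∈ S} := by
    rw [Fintype.card_coe, Fintype.card_fun]
    simpa using hScard2
  obtain ⟨emb⟩ := Function.Embedding.nonempty_of_card_le hcardle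
  refine ⟨n, fun x => (emb x : List Bool), ?_, ?_, ?_, ?_⟩
  · -- the length bound, in ℝ
    have hms2 : (2:ℝ) ≤ (m:ℝ) / (s:ℝ) := by
      rw [le_div_iff₀ hs0]
      have : (200:ℝ) * s ≤ m := by exact_mod_cast hB
      nlinarith
    have hlgms : (1:ℝ) ≤ Real.logb 2 ((m:ℝ) / (s:ℝ)) := by
      rw [← Real.logb_self_eq_one h2]
      exact (Real.logb_le_logb h2 two_pos (by linarith)).2 hms2
    have hnr : (n:ℝ) = m + (16 * s * L + 1) := by
      rw [hndef, hrdef]; push_cast; ring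
    have hslb1 : (1:ℝ) ≤ (s:ℝ) * lb := by nlinarith
    have hkey : (16:ℝ) * s * L + 1 ≤ 25 * s * lb := by
      have h1 : (16:ℝ) * s * L ≤ 24 * s * lb := by nlinarith
      linarith
    have hfinal : (25:ℝ) * s * lb ≤ 25 * s * lb * Real.logb 2 ((m:ℝ) / (s:ℝ)) := by
      nlinarith
    rw [hnr]
    push_cast
    linarith
  · -- injectivity
    intro x y hxy
    exact emb.injective (Subtype.coe_injective hxy)
  · -- lengths
    intro x
    exact hUlen _ (hSU (emb x).2)
  · -- resilience
    intro c hc c' hc' hne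
    obtain ⟨x, rfl⟩ := hc
    obtain ⟨y, rfl⟩ := hc'
    have h1 : ((emb x : List Bool)) ∈ S := (emb x).2
    have h2' : ((emb y : List Bool)) ∈ S := (emb y).2
    have := hSpair _ h1 _ h2' hne
    exact Set.not_nonempty_iff_eq_empty.1 this
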